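/- arXiv:1902.08247 — 7 statements merged into one kernel-verified Lean document; each statement's English description precedes it below -/
import Mathlib

section
/- Let Δ be the operator Δf = -f_tt + (sin t / cos t) f_t - (1/cos² t) f_φφ and x₁(t,φ) = (a + r cos t) cos φ. Then Δ² x₁ = (2/cos² t - 3/cos⁴ t) a cos φ + 4 r cos t cos φ on the domain where cos t ≠ 0. -/
open Real Filter

/-- partial derivative in the first variable `t` -/
noncomputable def pderivT (f : ℝ → ℝ → ℝ) : ℝ → ℝ → ℝ := fun t φ => deriv (fun s => f s φ) t

/-- partial derivative in the second variable `φ` -/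
noncomputable def pderivP (f : ℝ → ℝ → ℝ) : ℝ → ℝ → ℝ := fun t φ => deriv (fun ψ => f t ψ) φ

/-- The Beltrami operator of the third fundamental form of an anchor ring:
`Δf = -f_tt + (sin t / cos t) f_t - (1/cos² t) f_φφ`. -/
noncomputable def DeltaIII (f : ℝ → ℝ → ℝ) : ℝ → ℝ → ℝ := fun t φ =>
  - pderivT (pderivT f) t φ + (Real.sin t / Real.cos t) * pderivT f t φ
    - (1 / (Real.cos t) ^ 2) * pderivP (pderivP f) t φ

lemma pderivT_ext (f : ℝ → ℝ → ℝ) (g : ℝ → ℝ) (t φ : ℝ) (hfg : ∀ s, f s φ = g s) :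
    pderivT f t φ = deriv g t := by
  unfold pderivT; congr 1; funext s; exact hfg s

lemma pderivT_congr (f g : ℝ → ℝ → ℝ) (t φ : ℝ) (hfg : ∀ᶠ s in nhds t, f s φ = g s φ) :
    pderivT f t φ = pderivT g t φ :=
  Filter.EventuallyEq.deriv_eq hfg

lemma pderivP_ext (f : ℝ → ℝ → ℝ) (g : ℝ → ℝ) (t φ : ℝ) (hfg : ∀ ψ, f t ψ = g ψ) :
    pderivP f t φ = deriv g φ := by
  unfold pderivP; congr 1; funext s; exact hfg s

lemma ev_cos (t : ℝ) (h : Real.cos t ≠ 0) : ∀ᶠ s in nhds t, Real.cos s ≠ 0 :=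
  Real.continuous_cos.continuousAt.eventually_ne h

-- derivative facts
lemma hd0 (a r t : ℝ) (h : Real.cos t ≠ 0) :
    HasDerivAt (fun s => a / Real.cos s ^ 2 + 2 * r * Real.cos s)
      (2 * a * Real.sin t / Real.cos t ^ 3 - 2 * r * Real.sin t) t := by
  have h1 : HasDerivAt (fun s => Real.cos s ^ 2) (2 * Real.cos t ^ 1 * (-Real.sin t)) t :=
    (Real.hasDerivAt_cos t).pow 2
  have h2 := (hasDerivAt_const t a).div h1 (pow_ne_zero 2 h)
  have h3 := (Real.hasDerivAt_cos t).const_mul (2 * r)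
  have h4 := h2.add h3
  refine HasDerivAt.congr_deriv h4 ?_
  field_simp
  ring

lemma hd1 (a r t : ℝ) (h : Real.cos t ≠ 0) :
    HasDerivAt (fun s => 2 * a * Real.sin s / Real.cos s ^ 3 - 2 * r * Real.sin s)
      (2 * a * (Real.cos t ^ 2 + 3 * Real.sin t ^ 2) / Real.cos t ^ 4 - 2 * r * Real.cos t) t := by
  have hn : HasDerivAt (fun s => 2 * a * Real.sin s) (2 * a * Real.cos t) t :=
    (Real.hasDerivAt_sin t).const_mul (2 * a)
  have hden : HasDerivAt (fun s => Real.cos s ^ 3) (3 * Real.cos t ^ 2 * (-Real.sin t)) t :=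
    (Real.hasDerivAt_cos t).pow 3
  have h2 := hn.div hden (pow_ne_zero 3 h)
  have h3 := (Real.hasDerivAt_sin t).const_mul (2 * r)
  have h4 := h2.sub h3
  refine HasDerivAt.congr_deriv h4 ?_
  have h2' : Real.sin t ^ 2 = 1 - Real.cos t ^ 2 := Real.sin_sq t
  field_simp
  ring

lemma pd_cos (c φ : ℝ) : deriv (fun ψ => c * Real.cos ψ) φ = -(c * Real.sin φ) := by
  have := ((Real.hasDerivAt_cos φ).const_mul c).deriv
  rw [this]; ring

lemma pderivP2 (f : ℝ → ℝ → ℝ) (c t φ : ℝ) (hf : ∀ ψ, f t ψ = c * Real.cos ψ) :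
    pderivP (pderivP f) t φ = -(c * Real.cos φ) := by
  rw [pderivP_ext _ (fun ψ => -(c * Real.sin ψ)) t φ
    (fun ψ => (pderivP_ext f (fun χ => c * Real.cos χ) t ψ hf).trans (pd_cos c ψ))]
  have := (((Real.hasDerivAt_sin φ).const_mul c).neg).deriv
  exact this

lemma delta_x1 (a r : ℝ) (t φ : ℝ) (h : Real.cos t ≠ 0) :
    DeltaIII (fun t φ => (a + r * Real.cos t) * Real.cos φ) t φ
      = (a / Real.cos t ^ 2 + 2 * r * Real.cos t) * Real.cos φ := by
  have hT : ∀ s ψ, pderivT (fun t φ => (a + r * Real.cos t) * Real.cos φ) s ψ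
      = r * (-Real.sin s) * Real.cos ψ := by
    intro s ψ
    unfold pderivT
    have := ((((Real.hasDerivAt_cos s).const_mul r).const_add a).mul_const (Real.cos ψ)).deriv
    rw [this]
  have hTT : pderivT (pderivT (fun t φ => (a + r * Real.cos t) * Real.cos φ)) t φ
      = r * (-Real.cos t) * Real.cos φ := by
    rw [pderivT_ext _ (fun s => r * (-Real.sin s) * Real.cos φ) t φ (fun s => hT s φ)]
    have := ((((Real.hasDerivAt_sin t).neg).const_mul r).mul_const (Real.cos φ)).deriv
    exact this
  have hPP : pderivP (pderivP (fun t φ => (a + r * Real.cos t) * Real.cos φ)) t φ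
      = -((a + r * Real.cos t) * Real.cos φ) :=
    pderivP2 _ (a + r * Real.cos t) t φ (fun ψ => rfl)
  unfold DeltaIII
  rw [hTT, hPP, hT t φ]
  have h2' : Real.sin t ^ 2 = 1 - Real.cos t ^ 2 := Real.sin_sq t
  field_simp
  linear_combination (-(r * Real.cos φ * Real.cos t)) * h2'

theorem stmt_3 (a r : ℝ) (t φ : ℝ) (h : Real.cos t ≠ 0) :
    (DeltaIII^[2] (fun t φ => (a + r * Real.cos t) * Real.cos φ)) t φ =
      (2 / (Real.cos t) ^ 2 - 3 / (Real.cos t) ^ 4) * (a * Real.cos φ)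
        + 4 * r * Real.cos t * Real.cos φ := by
  rw [Function.iterate_succ, Function.iterate_one, Function.comp_apply]
  set F : ℝ → ℝ → ℝ := fun t φ => (a + r * Real.cos t) * Real.cos φ with hF
  set G : ℝ → ℝ → ℝ := fun s ψ => (a / Real.cos s ^ 2 + 2 * r * Real.cos s) * Real.cos ψ with hG
  -- first derivative in t of DeltaIII F agrees with that of G near t
  have hGd : ∀ s ψ, Real.cos s ≠ 0 → pderivT G s ψ
      = (2 * a * Real.sin s / Real.cos s ^ 3 - 2 * r * Real.sin s) * Real.cos ψ := by
    intro s ψ hs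
    unfold pderivT
    exact ((hd0 a r s hs).mul_const (Real.cos ψ)).deriv
  have hDFd : ∀ s ψ, Real.cos s ≠ 0 → pderivT (DeltaIII F) s ψ = pderivT G s ψ := by
    intro s ψ hs
    exact pderivT_congr _ _ s ψ ((ev_cos s hs).mono (fun u hu => delta_x1 a r u ψ hu))
  have hTT : pderivT (pderivT (DeltaIII F)) t φ
      = (2 * a * (Real.cos t ^ 2 + 3 * Real.sin t ^ 2) / Real.cos t ^ 4 - 2 * r * Real.cos t)
        * Real.cos φ := by
    have e1 : pderivT (pderivT (DeltaIII F)) t φ = pderivT (pderivT G) t φ :=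
      pderivT_congr _ _ t φ ((ev_cos t h).mono (fun u hu => hDFd u φ hu))
    have e2 : pderivT (pderivT G) t φ
        = deriv (fun s => (2 * a * Real.sin s / Real.cos s ^ 3 - 2 * r * Real.sin s) * Real.cos φ) t := by
      refine pderivT_congr _ (fun s ψ => (2 * a * Real.sin s / Real.cos s ^ 3 - 2 * r * Real.sin s) * Real.cos ψ) t φ ((ev_cos t h).mono (fun u hu => hGd u φ hu)) |>.trans rfl
    rw [e1, e2]
    exact ((hd1 a r t h).mul_const (Real.cos φ)).deriv
  have hT1 : pderivT (DeltaIII F) t φ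
      = (2 * a * Real.sin t / Real.cos t ^ 3 - 2 * r * Real.sin t) * Real.cos φ := by
    rw [hDFd t φ h, hGd t φ h]
  have hPP : pderivP (pderivP (DeltaIII F)) t φ
      = -((a / Real.cos t ^ 2 + 2 * r * Real.cos t) * Real.cos φ) :=
    pderivP2 _ _ t φ (fun ψ => delta_x1 a r t ψ h)
  show DeltaIII (DeltaIII F) t φ = _
  rw [show DeltaIII (DeltaIII F) t φ = - pderivT (pderivT (DeltaIII F)) t φ
    + (Real.sin t / Real.cos t) * pderivT (DeltaIII F) t φ
    - (1 / (Real.cos t) ^ 2) * pderivP (pderivP (DeltaIII F)) t φ from rfl]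
  rw [hTT, hPP, hT1]
  have h2' : Real.sin t ^ 2 = 1 - Real.cos t ^ 2 := Real.sin_sq t
  have h3' : Real.sin t * Real.sin t = 1 - Real.cos t * Real.cos t := by nlinarith [h2']
  field_simp
  ring_nf
  rw [Real.sin_sq t]
  ring
end

section
/- Let Δ be the operator Δf = -f_tt + (sin t / cos t) f_t - (1/cos² t) f_φφ and x₁(t,φ) = (a + r cos t) cos φ. Then Δ³ x₁ = (4/cos² t - 42/cos⁴ t + 45/cos⁶ t) a cos φ + 8 r cos t cos φ on the domain where cos t ≠ 0. -/
open Real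

lemma eventually_cos_ne {t : ℝ} (h : Real.cos t ≠ 0) : ∀ᶠ s in nhds t, Real.cos s ≠ 0 :=
  Real.continuous_cos.continuousAt.eventually_ne h

/-- If two functions agree wherever `cos t ≠ 0`, so do their `DeltaIII`s there. -/
lemma delta_congr (F G : ℝ → ℝ → ℝ) (hFG : ∀ s ψ, Real.cos s ≠ 0 → F s ψ = G s ψ)
    (t φ : ℝ) (h : Real.cos t ≠ 0) : DeltaIII F t φ = DeltaIII G t φ := by
  have hev : ∀ ψ, (fun s => F s ψ) =ᶠ[nhds t] (fun s => G s ψ) := fun ψ =>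
    (eventually_cos_ne h).mono fun s hs => hFG s ψ hs
  have hT : ∀ s, Real.cos s ≠ 0 → ∀ ψ, pderivT F s ψ = pderivT G s ψ := by
    intro s hs ψ
    have hev' : (fun u => F u ψ) =ᶠ[nhds s] (fun u => G u ψ) :=
      (eventually_cos_ne hs).mono fun u hu => hFG u ψ hu
    exact hev'.deriv_eq
  have hTT : pderivT (pderivT F) t φ = pderivT (pderivT G) t φ := by
    have hev' : (fun s => pderivT F s φ) =ᶠ[nhds t] (fun s => pderivT G s φ) :=
      (eventually_cos_ne h).mono fun s hs => hT s hs φ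
    exact hev'.deriv_eq
  have hP : ∀ ψ, pderivP F t ψ = pderivP G t ψ := by
    intro ψ
    have : (fun χ => F t χ) = (fun χ => G t χ) := funext fun χ => hFG t χ h
    simp only [pderivP, this]
  have hPP : pderivP (pderivP F) t φ = pderivP (pderivP G) t φ := by
    have h2 : pderivP F t = pderivP G t := funext hP
    show deriv (fun ψ => pderivP F t ψ) φ = deriv (fun ψ => pderivP G t ψ) φ
    rw [show (fun ψ => pderivP F t ψ) = (fun ψ => pderivP G t ψ) from h2]
  simp only [DeltaIII, hTT, hT t h φ, hPP]

/-- `DeltaIII` of a separated function `g t * cos φ`. -/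
lemma delta_formula (g g' g'' : ℝ → ℝ)
    (hg : ∀ s, Real.cos s ≠ 0 → HasDerivAt g (g' s) s)
    (hg' : ∀ s, Real.cos s ≠ 0 → HasDerivAt g' (g'' s) s)
    (t φ : ℝ) (h : Real.cos t ≠ 0) :
    DeltaIII (fun s ψ => g s * Real.cos ψ) t φ =
      (-(g'' t) + (Real.sin t / Real.cos t) * g' t + (1 / Real.cos t ^ 2) * g t) * Real.cos φ := by
  have hT : ∀ s, Real.cos s ≠ 0 → ∀ ψ,
      pderivT (fun s ψ => g s * Real.cos ψ) s ψ = g' s * Real.cos ψ := by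
    intro s hs ψ
    exact ((hg s hs).mul_const _).deriv
  have hTT : pderivT (pderivT (fun s ψ => g s * Real.cos ψ)) t φ = g'' t * Real.cos φ := by
    have hev : (fun s => pderivT (fun s ψ => g s * Real.cos ψ) s φ) =ᶠ[nhds t]
        (fun s => g' s * Real.cos φ) :=
      (eventually_cos_ne h).mono fun s hs => hT s hs φ
    have := hev.deriv_eq
    rw [pderivT] at *
    rw [this]
    exact ((hg' t h).mul_const _).deriv
  have hP : ∀ ψ, pderivP (fun s ψ => g s * Real.cos ψ) t ψ = g t * (-Real.sin ψ) := by
    intro ψ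
    exact ((Real.hasDerivAt_cos ψ).const_mul (g t)).deriv
  have hPP : pderivP (pderivP (fun s ψ => g s * Real.cos ψ)) t φ = g t * (-Real.cos φ) := by
    have h1 : (fun ψ => pderivP (fun s ψ => g s * Real.cos ψ) t ψ)
        = fun ψ => g t * (-Real.sin ψ) := funext hP
    rw [pderivP, h1]
    have : HasDerivAt (fun ψ => g t * (-Real.sin ψ)) (g t * (-Real.cos φ)) φ := by
      simpa using ((Real.hasDerivAt_sin φ).neg.const_mul (g t))
    exact this.deriv
  simp only [DeltaIII, hTT, hT t h φ, hPP]
  ring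

theorem stmt_4 (a r : ℝ) (t φ : ℝ) (h : Real.cos t ≠ 0) :
    (DeltaIII^[3] (fun t φ => (a + r * Real.cos t) * Real.cos φ)) t φ =
      (4 / (Real.cos t) ^ 2 - 42 / (Real.cos t) ^ 4 + 45 / (Real.cos t) ^ 6) * (a * Real.cos φ)
        + 8 * r * Real.cos t * Real.cos φ := by
  -- the successive radial profiles
  set g0 : ℝ → ℝ := fun s => a + r * Real.cos s with hg0def
  set g1 : ℝ → ℝ := fun s => a / Real.cos s ^ 2 + 2 * r * Real.cos s with hg1def
  set g2 : ℝ → ℝ := fun s => 2 * a / Real.cos s ^ 2 - 3 * a / Real.cos s ^ 4 + 4 * r * Real.cos s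
    with hg2def
  -- derivatives of g0
  have hg0 : ∀ s, Real.cos s ≠ 0 → HasDerivAt g0 (-(r * Real.sin s)) s := by
    intro s _
    exact (((Real.hasDerivAt_cos s).const_mul r).const_add a).congr_deriv (by ring)
  have hg0' : ∀ s, Real.cos s ≠ 0 → HasDerivAt (fun s => -(r * Real.sin s)) (-(r * Real.cos s)) s := by
    intro s _
    exact ((Real.hasDerivAt_sin s).const_mul r).neg.congr_deriv (by ring)
  -- derivatives of g1
  have hg1 : ∀ s, Real.cos s ≠ 0 →
      HasDerivAt g1 (2 * a * Real.sin s / Real.cos s ^ 3 - 2 * r * Real.sin s) s := by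
    intro s hs
    have h1 : HasDerivAt (fun u => a / Real.cos u ^ 2)
        ((0 * Real.cos s ^ 2 - a * (2 * Real.cos s ^ 1 * (-Real.sin s))) / (Real.cos s ^ 2) ^ 2) s :=
      (hasDerivAt_const s a).div ((Real.hasDerivAt_cos s).pow 2) (pow_ne_zero 2 hs)
    have h2 : HasDerivAt (fun u => 2 * r * Real.cos u) (2 * r * (-Real.sin s)) s :=
      (Real.hasDerivAt_cos s).const_mul (2 * r)
    have := h1.add h2
    exact this.congr_deriv (by field_simp; ring)
  have hg1' : ∀ s, Real.cos s ≠ 0 →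
      HasDerivAt (fun s => 2 * a * Real.sin s / Real.cos s ^ 3 - 2 * r * Real.sin s)
        (2 * a / Real.cos s ^ 2 + 6 * a * Real.sin s ^ 2 / Real.cos s ^ 4 - 2 * r * Real.cos s) s := by
    intro s hs
    have h1 : HasDerivAt (fun u => 2 * a * Real.sin u / Real.cos u ^ 3)
        ((2 * a * Real.cos s * Real.cos s ^ 3 -
          2 * a * Real.sin s * (3 * Real.cos s ^ 2 * (-Real.sin s))) / (Real.cos s ^ 3) ^ 2) s :=
      ((Real.hasDerivAt_sin s).const_mul (2 * a)).div ((Real.hasDerivAt_cos s).pow 3)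
        (pow_ne_zero 3 hs)
    have h2 : HasDerivAt (fun u => 2 * r * Real.sin u) (2 * r * Real.cos s) s :=
      (Real.hasDerivAt_sin s).const_mul (2 * r)
    have := h1.sub h2
    exact this.congr_deriv (by field_simp; ring)
  -- derivatives of g2
  have hg2 : ∀ s, Real.cos s ≠ 0 →
      HasDerivAt g2 (4 * a * Real.sin s / Real.cos s ^ 3 - 12 * a * Real.sin s / Real.cos s ^ 5
        - 4 * r * Real.sin s) s := by
    intro s hs
    have h1 : HasDerivAt (fun u => 2 * a / Real.cos u ^ 2)
        ((0 * Real.cos s ^ 2 - 2 * a * (2 * Real.cos s ^ 1 * (-Real.sin s))) / (Real.cos s ^ 2) ^ 2) s :=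
      (hasDerivAt_const s (2 * a)).div ((Real.hasDerivAt_cos s).pow 2) (pow_ne_zero 2 hs)
    have h2 : HasDerivAt (fun u => 3 * a / Real.cos u ^ 4)
        ((0 * Real.cos s ^ 4 - 3 * a * (4 * Real.cos s ^ 3 * (-Real.sin s))) / (Real.cos s ^ 4) ^ 2) s :=
      (hasDerivAt_const s (3 * a)).div ((Real.hasDerivAt_cos s).pow 4) (pow_ne_zero 4 hs)
    have h3 : HasDerivAt (fun u => 4 * r * Real.cos u) (4 * r * (-Real.sin s)) s :=
      (Real.hasDerivAt_cos s).const_mul (4 * r)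
    have := (h1.sub h2).add h3
    exact this.congr_deriv (by field_simp; ring)
  have hg2' : ∀ s, Real.cos s ≠ 0 →
      HasDerivAt (fun s => 4 * a * Real.sin s / Real.cos s ^ 3
          - 12 * a * Real.sin s / Real.cos s ^ 5 - 4 * r * Real.sin s)
        (4 * a / Real.cos s ^ 2 + 12 * a * Real.sin s ^ 2 / Real.cos s ^ 4
          - 12 * a / Real.cos s ^ 4 - 60 * a * Real.sin s ^ 2 / Real.cos s ^ 6
          - 4 * r * Real.cos s) s := by
    intro s hs
    have h1 : HasDerivAt (fun u => 4 * a * Real.sin u / Real.cos u ^ 3)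
        ((4 * a * Real.cos s * Real.cos s ^ 3 -
          4 * a * Real.sin s * (3 * Real.cos s ^ 2 * (-Real.sin s))) / (Real.cos s ^ 3) ^ 2) s :=
      ((Real.hasDerivAt_sin s).const_mul (4 * a)).div ((Real.hasDerivAt_cos s).pow 3)
        (pow_ne_zero 3 hs)
    have h2 : HasDerivAt (fun u => 12 * a * Real.sin u / Real.cos u ^ 5)
        ((12 * a * Real.cos s * Real.cos s ^ 5 -
          12 * a * Real.sin s * (5 * Real.cos s ^ 4 * (-Real.sin s))) / (Real.cos s ^ 5) ^ 2) s :=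
      ((Real.hasDerivAt_sin s).const_mul (12 * a)).div ((Real.hasDerivAt_cos s).pow 5)
        (pow_ne_zero 5 hs)
    have h3 : HasDerivAt (fun u => 4 * r * Real.sin u) (4 * r * Real.cos s) s :=
      (Real.hasDerivAt_sin s).const_mul (4 * r)
    have := (h1.sub h2).sub h3
    exact this.congr_deriv (by field_simp; ring)
  -- step 1
  have E1 : ∀ s ψ, Real.cos s ≠ 0 →
      DeltaIII (fun s ψ => g0 s * Real.cos ψ) s ψ = g1 s * Real.cos ψ := by
    intro s ψ hs
    rw [delta_formula g0 (fun s => -(r * Real.sin s)) (fun s => -(r * Real.cos s)) hg0 hg0' s ψ hs]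
    have hsin : Real.sin s ^ 2 = 1 - Real.cos s ^ 2 := Real.sin_sq s
    simp only [hg0def, hg1def]
    field_simp
    linear_combination (-(r * Real.cos s * Real.cos ψ)) * hsin
  -- step 2
  have E2 : ∀ s ψ, Real.cos s ≠ 0 →
      DeltaIII (fun s ψ => g1 s * Real.cos ψ) s ψ = g2 s * Real.cos ψ := by
    intro s ψ hs
    rw [delta_formula g1 _ _ hg1 hg1' s ψ hs]
    have hsin : Real.sin s ^ 2 = 1 - Real.cos s ^ 2 := Real.sin_sq s
    simp only [hg1def, hg2def]
    rw [hsin]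
    field_simp
    linear_combination (2 * a - 2 * r * Real.cos s ^ 3) * Real.cos ψ * hsin
  -- step 3
  have E3 : ∀ s ψ, Real.cos s ≠ 0 →
      DeltaIII (fun s ψ => g2 s * Real.cos ψ) s ψ =
        (4 / Real.cos s ^ 2 - 42 / Real.cos s ^ 4 + 45 / Real.cos s ^ 6) * (a * Real.cos ψ)
          + 8 * r * Real.cos s * Real.cos ψ := by
    intro s ψ hs
    rw [delta_formula g2 _ _ hg2 hg2' s ψ hs]
    have hsin : Real.sin s ^ 2 = 1 - Real.cos s ^ 2 := Real.sin_sq s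
    simp only [hg2def]
    rw [hsin]
    field_simp
    linear_combination (4 * a * Real.cos s ^ 2 - 12 * a
      - 4 * r * Real.cos s ^ 5) * Real.cos ψ * hsin
  -- assemble
  have hF : (fun t φ => (a + r * Real.cos t) * Real.cos φ) = fun s ψ => g0 s * Real.cos ψ := rfl
  have step2 : ∀ s ψ, Real.cos s ≠ 0 →
      DeltaIII (DeltaIII (fun s ψ => g0 s * Real.cos ψ)) s ψ = g2 s * Real.cos ψ := by
    intro s ψ hs
    rw [delta_congr _ (fun s ψ => g1 s * Real.cos ψ) E1 s ψ hs]
    exact E2 s ψ hs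
  have : (DeltaIII^[3] (fun t φ => (a + r * Real.cos t) * Real.cos φ)) t φ
      = DeltaIII (DeltaIII (DeltaIII (fun s ψ => g0 s * Real.cos ψ))) t φ := by
    rw [hF]
    rfl
  rw [this, delta_congr _ (fun s ψ => g2 s * Real.cos ψ) step2 t φ h]
  exact E3 t φ h
end

section
/- Let c ≠ 0 be a real number, n ≥ 1 an integer, and Q a polynomial in two variables with real coefficients. Then the identity c/cos φ = Q(cos φ, sin φ) cannot hold for all φ in a nonempty open interval on which cos φ ≠ 0. -/
theorem stmt_8 (c : ℝ) (hc : c ≠ 0) (n : ℕ) (hn : 1 ≤ n) (Q : MvPolynomial (Fin 2) ℝ)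
    (x y : ℝ) (hxy : x < y) (hcos : ∀ φ ∈ Set.Ioo x y, Real.cos φ ≠ 0) :
    ¬ ∀ φ ∈ Set.Ioo x y,
        c / Real.cos φ = MvPolynomial.eval ![Real.cos φ, Real.sin φ] Q := by
  intro h
  -- analyticity of real cos and sin
  have hcosA : AnalyticOnNhd ℝ Real.cos Set.univ := by
    have h1 : Real.cos = fun t : ℝ => Complex.reCLM (Complex.cos (Complex.ofRealCLM t)) := by
      ext t
      simp [Complex.cos_ofReal_re]
    rw [h1]
    intro t _
    have hC : AnalyticAt ℂ Complex.cos (Complex.ofRealCLM t) :=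
      (Complex.differentiable_cos.differentiableOn.analyticOnNhd isOpen_univ) _ trivial
    exact (Complex.reCLM.analyticAt _).comp ((hC.restrictScalars).comp (Complex.ofRealCLM.analyticAt t))
  have hsinA : AnalyticOnNhd ℝ Real.sin Set.univ := by
    have h1 : Real.sin = fun t : ℝ => Complex.reCLM (Complex.sin (Complex.ofRealCLM t)) := by
      ext t
      simp [Complex.sin_ofReal_re]
    rw [h1]
    intro t _
    have hC : AnalyticAt ℂ Complex.sin (Complex.ofRealCLM t) :=
      (Complex.differentiable_sin.differentiableOn.analyticOnNhd isOpen_univ) _ trivial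
    exact (Complex.reCLM.analyticAt _).comp ((hC.restrictScalars).comp (Complex.ofRealCLM.analyticAt t))
  have key : ∀ R : MvPolynomial (Fin 2) ℝ,
      AnalyticOnNhd ℝ (fun φ => MvPolynomial.eval ![Real.cos φ, Real.sin φ] R) Set.univ := by
    intro R
    induction R using MvPolynomial.induction_on with
    | C a => simpa using (analyticOnNhd_const : AnalyticOnNhd ℝ (fun _ : ℝ => a) Set.univ)
    | add p q hp hq => simpa [MvPolynomial.eval_add, Pi.add_def] using hp.add hq
    | mul_X p i hp =>
      simp only [MvPolynomial.eval_mul, MvPolynomial.eval_X]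
      apply hp.mul
      fin_cases i
      · simpa using hcosA
      · simpa using hsinA
  set f : ℝ → ℝ := fun φ => Real.cos φ * MvPolynomial.eval ![Real.cos φ, Real.sin φ] Q - c
    with hf
  have hfa : AnalyticOnNhd ℝ f Set.univ := (hcosA.mul (key Q)).sub analyticOnNhd_const
  have hz0 : ∀ φ ∈ Set.Ioo x y, f φ = 0 := by
    intro φ hφ
    have hcφ := hcos φ hφ
    have := h φ hφ
    simp only [hf]
    rw [← this]
    field_simp
    ring
  set z : ℝ := (x + y) / 2 with hzdef
  have hzmem : z ∈ Set.Ioo x y := ⟨by linarith, by linarith⟩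
  have hev : f =ᶠ[nhds z] (fun _ => (0 : ℝ)) := by
    filter_upwards [isOpen_Ioo.mem_nhds hzmem] with t ht using hz0 t ht
  have hall : Set.EqOn f (fun _ => (0 : ℝ)) Set.univ :=
    hfa.eqOn_of_preconnected_of_eventuallyEq analyticOnNhd_const isPreconnected_univ
      (Set.mem_univ z) hev
  have := hall (Set.mem_univ (Real.pi / 2))
  simp only [hf, Real.cos_pi_div_two, zero_mul, zero_sub] at this
  exact hc (by linarith)
end

section
/- Let Δ be the operator Δf = -f_tt + (sin t / cos t) f_t - (1/cos² t) f_φφ. For every positive integer m there exist real constants d₀, d₁, …, d_{m-1} with d₀ = 2^{m-1} and d_{m-1} = (-1)^{m-1}(2m-1)∏_{j=1}^{m}(2j-3)² ≠ 0, such that for x₁(t,φ) = (a + r cos t) cos φ one has Δ^m x₁ = (∑_{j=0}^{m-1} d_j / cos^{2(j+1)} t) · a cos φ + 2^m r cos t cos φ on the domain where cos t ≠ 0. -/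
open Real

/-! ### Auxiliary combinatorics -/

noncomputable def ee : ℕ → ℕ → ℝ
  | 0, 0 => 1
  | 0, _+1 => 0
  | (m+1), 0 => 2 * ee m 0
  | (m+1), (k+1) => (2*(k:ℝ)+4)*(2*(k:ℝ)+3) * ee m (k+1)
      - (2*(k:ℝ)+1)*(2*(k:ℝ)+3) * ee m k

lemma ee_zero : ∀ m j, m < j → ee m j = 0
  | 0, _+1, _ => rfl
  | m+1, j+1, h => by
      have h1 : ee m (j+1) = 0 := ee_zero m (j+1) (by omega)
      have h2 : ee m j = 0 := ee_zero m j (by omega)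
      show (2*(j:ℝ)+4)*(2*(j:ℝ)+3) * ee m (j+1) - (2*(j:ℝ)+1)*(2*(j:ℝ)+3) * ee m j = 0
      rw [h1, h2]; ring

lemma ee_base (m : ℕ) : ee m 0 = 2 ^ m := by
  induction m with
  | zero => rfl
  | succ n ih => show 2 * ee n 0 = _; rw [ih]; ring

lemma ee_diag (m : ℕ) : ee m m =
    (-1 : ℝ)^m * (2*(m:ℝ)+1) * ∏ j ∈ Finset.Icc 1 (m+1), (2*(j:ℝ)-3)^2 := by
  induction m with
  | zero => simp [ee]; norm_num
  | succ n ih =>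
      show (2*(n:ℝ)+4)*(2*(n:ℝ)+3) * ee n (n+1) - (2*(n:ℝ)+1)*(2*(n:ℝ)+3) * ee n n = _
      rw [ee_zero n (n+1) (by omega), ih,
        Finset.prod_Icc_succ_top (by omega : 1 ≤ n+2)]
      push_cast
      ring

lemma factor_ne (j : ℕ) : (2*(j:ℝ)-3) ≠ 0 := by
  intro h
  have h2 : ((2*j : ℕ) : ℝ) = (3 : ℕ) := by push_cast; linarith
  have := Nat.cast_injective h2
  omega

lemma ee_diag_ne (m : ℕ) : ee m m ≠ 0 := by
  rw [ee_diag]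
  apply mul_ne_zero
  · apply mul_ne_zero
    · exact pow_ne_zero _ (by norm_num)
    · positivity
  · rw [Finset.prod_ne_zero_iff]
    exact fun j _ => pow_ne_zero _ (factor_ne j)

lemma sum_step (m : ℕ) (x : ℝ) :
    ∑ j ∈ Finset.range (m+1), ee m j *
        ((2*(j:ℝ)+2)*(2*(j:ℝ)+1) * x^(2*j+2) - (2*(j:ℝ)+1)*(2*(j:ℝ)+3) * x^(2*j+4))
      = ∑ j ∈ Finset.range (m+2), ee (m+1) j * x^(2*j+2) := by
  set A : ℕ → ℝ := fun j => ee m j * ((2*(j:ℝ)+2)*(2*(j:ℝ)+1) * x^(2*j+2)) with hA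
  set B : ℕ → ℝ := fun j => ee m j * ((2*(j:ℝ)+1)*(2*(j:ℝ)+3) * x^(2*j+4)) with hB
  set C : ℕ → ℝ := fun i => (2*(i:ℝ)+4)*(2*(i:ℝ)+3) * (ee m (i+1) * x^(2*i+4)) with hC
  have e1 : ∑ j ∈ Finset.range (m+1), ee m j *
        ((2*(j:ℝ)+2)*(2*(j:ℝ)+1) * x^(2*j+2) - (2*(j:ℝ)+1)*(2*(j:ℝ)+3) * x^(2*j+4))
      = (∑ j ∈ Finset.range (m+1), A j) - ∑ j ∈ Finset.range (m+1), B j := by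
    rw [← Finset.sum_sub_distrib]
    exact Finset.sum_congr rfl (fun j _ => by simp only [hA, hB]; ring)
  have e2 : ∑ j ∈ Finset.range (m+1), A j = (∑ i ∈ Finset.range m, C i) + A 0 := by
    rw [Finset.sum_range_succ' A m]
    congr 1
    refine Finset.sum_congr rfl (fun i _ => ?_)
    simp only [hA, hC]
    have h4 : 2*(i+1)+2 = 2*i+4 := by omega
    rw [h4]; push_cast; ring
  have e3 : ∑ j ∈ Finset.range (m+2), ee (m+1) j * x^(2*j+2)
      = ((∑ i ∈ Finset.range (m+1), C i) - ∑ i ∈ Finset.range (m+1), B i)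
        + ee (m+1) 0 * x^(2*0+2) := by
    rw [Finset.sum_range_succ' (fun j => ee (m+1) j * x^(2*j+2)) (m+1)]
    congr 1
    rw [← Finset.sum_sub_distrib]
    refine Finset.sum_congr rfl (fun i _ => ?_)
    show ((2*(i:ℝ)+4)*(2*(i:ℝ)+3) * ee m (i+1) - (2*(i:ℝ)+1)*(2*(i:ℝ)+3) * ee m i)
        * x^(2*(i+1)+2) = C i - B i
    simp only [hB, hC]
    have h4 : 2*(i+1)+2 = 2*i+4 := by omega
    rw [h4]; ring
  have e4 : ∑ i ∈ Finset.range (m+1), C i = ∑ i ∈ Finset.range m, C i := by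
    rw [Finset.sum_range_succ, hC]
    simp [ee_zero m (m+1) (by omega)]
  have e5 : A 0 = ee (m+1) 0 * x^(2*0+2) := by
    show ee m 0 * ((2*((0:ℕ):ℝ)+2)*(2*((0:ℕ):ℝ)+1) * x^(2*0+2)) = 2 * ee m 0 * x^(2*0+2)
    push_cast; ring
  rw [e1, e2, e3, e4, e5]
  ring

lemma key_alg (J c s u v : ℝ) (hcu : c * u = 1) (hs : s^2 + c^2 = 1) (E : ℝ) :
    -(E * ((2*J+2) * (c * (v*u) + (2*J+3) * s^2 * (v*u^2))))
      + (s*u) * (E * ((2*J+2) * s * (v*u))) + u^2 * (E * v)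
    = E * ((2*J+2)*(2*J+1) * v - (2*J+1)*(2*J+3) * (v*u^2)) := by
  linear_combination (E * (-(2*J+2)^2) * v * u^2) * hs
    + (E * ((-(2*J+2)) + (2*J+2)^2*(c*u+1)) * v) * hcu

/-! ### Locality of the operator -/

lemma pderivT_congr_s9 {f h : ℝ → ℝ → ℝ} {U : Set ℝ} (hU : IsOpen U)
    (hfh : ∀ s ∈ U, ∀ ψ, f s ψ = h s ψ) {t : ℝ} (ht : t ∈ U) (φ : ℝ) :
    pderivT f t φ = pderivT h t φ := by
  apply Filter.EventuallyEq.deriv_eq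
  filter_upwards [hU.mem_nhds ht] with s hs
  exact hfh s hs φ

lemma DeltaIII_congr {f h : ℝ → ℝ → ℝ} {U : Set ℝ} (hU : IsOpen U)
    (hfh : ∀ s ∈ U, ∀ ψ, f s ψ = h s ψ) {t : ℝ} (ht : t ∈ U) (φ : ℝ) :
    DeltaIII f t φ = DeltaIII h t φ := by
  have hT : ∀ s ∈ U, ∀ ψ, pderivT f s ψ = pderivT h s ψ :=
    fun s hs ψ => pderivT_congr_s9 hU hfh hs ψ
  have hP : ∀ s ∈ U, ∀ ψ, pderivP f s ψ = pderivP h s ψ := by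
    intro s hs ψ
    unfold pderivP
    congr 1
    ext ψ'
    exact hfh s hs ψ'
  have hPP : pderivP (pderivP f) t φ = pderivP (pderivP h) t φ := by
    unfold pderivP
    congr 1
    ext ψ'
    exact hP t ht ψ'
  unfold DeltaIII
  rw [hPP, hT t ht φ, pderivT_congr_s9 hU hT ht φ]

/-- Δ of a separated function g(t)·cos φ. -/
lemma delta_eq (g g' g'' : ℝ → ℝ) (t φ : ℝ)
    (h1 : ∀ᶠ s in nhds t, HasDerivAt g (g' s) s)
    (h2 : HasDerivAt g' (g'' t) t) :
    DeltaIII (fun x ψ => g x * Real.cos ψ) t φ =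
      (-(g'' t) + (Real.sin t / Real.cos t) * g' t
        + (1 / (Real.cos t) ^ 2) * g t) * Real.cos φ := by
  have hP1 : ∀ x ψ, pderivP (fun x ψ => g x * Real.cos ψ) x ψ = -(g x * Real.sin ψ) := by
    intro x ψ
    unfold pderivP
    rw [((Real.hasDerivAt_cos ψ).const_mul (g x)).deriv]
    ring
  have hPP : pderivP (pderivP (fun x ψ => g x * Real.cos ψ)) t φ = -(g t * Real.cos φ) := by
    show deriv (fun ψ => pderivP (fun x ψ => g x * Real.cos ψ) t ψ) φ = _
    have : (fun ψ => pderivP (fun x ψ => g x * Real.cos ψ) t ψ)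
        = fun ψ => -(g t * Real.sin ψ) := by
      ext ψ; exact hP1 t ψ
    rw [this]
    rw [(((Real.hasDerivAt_sin φ).const_mul (g t)).fun_neg).deriv]
  have hT1 : ∀ᶠ s in nhds t, ∀ ψ, pderivT (fun x ψ => g x * Real.cos ψ) s ψ
      = g' s * Real.cos ψ := by
    filter_upwards [h1] with s hs
    intro ψ
    exact ((hs.mul_const (Real.cos ψ)).deriv)
  have hT : pderivT (fun x ψ => g x * Real.cos ψ) t φ = g' t * Real.cos φ :=
    hT1.self_of_nhds φ
  have hTT : pderivT (pderivT (fun x ψ => g x * Real.cos ψ)) t φ = g'' t * Real.cos φ := by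
    show deriv (fun s => pderivT (fun x ψ => g x * Real.cos ψ) s φ) t = _
    have heq : (fun s => pderivT (fun x ψ => g x * Real.cos ψ) s φ)
        =ᶠ[nhds t] fun s => g' s * Real.cos φ := by
      filter_upwards [hT1] with s hs using hs φ
    rw [heq.deriv_eq, (h2.mul_const (Real.cos φ)).deriv]
  unfold DeltaIII
  rw [hTT, hT, hPP]
  ring

/-! ### The explicit family of functions and their derivatives -/

noncomputable def Gfun (a r : ℝ) (m : ℕ) : ℝ → ℝ := fun x =>
  (∑ j ∈ Finset.range (m+1), ee m j * ((Real.cos x)⁻¹)^(2*j+2)) * a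
    + 2^(m+1) * r * Real.cos x

noncomputable def Gfun' (a r : ℝ) (m : ℕ) : ℝ → ℝ := fun x =>
  (∑ j ∈ Finset.range (m+1), ee m j *
      ((2*(j:ℝ)+2) * Real.sin x * ((Real.cos x)⁻¹)^(2*j+3))) * a
    + 2^(m+1) * r * (-Real.sin x)

noncomputable def Gfun'' (a r : ℝ) (m : ℕ) : ℝ → ℝ := fun x =>
  (∑ j ∈ Finset.range (m+1), ee m j *
      ((2*(j:ℝ)+2) * (Real.cos x * ((Real.cos x)⁻¹)^(2*j+3)
        + (2*(j:ℝ)+3) * (Real.sin x)^2 * ((Real.cos x)⁻¹)^(2*j+4)))) * a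
    + 2^(m+1) * r * (-Real.cos x)

lemma hasDeriv_inv_cos {x : ℝ} (hx : Real.cos x ≠ 0) :
    HasDerivAt (fun y => (Real.cos y)⁻¹) (Real.sin x * ((Real.cos x)⁻¹)^2) x := by
  have h := (Real.hasDerivAt_cos x).fun_inv hx
  refine h.congr_deriv ?_
  field_simp

lemma hasDeriv_T {x : ℝ} (hx : Real.cos x ≠ 0) (j : ℕ) :
    HasDerivAt (fun y => ((Real.cos y)⁻¹)^(2*j+2))
      ((2*(j:ℝ)+2) * Real.sin x * ((Real.cos x)⁻¹)^(2*j+3)) x := by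
  have h := (hasDeriv_inv_cos hx).fun_pow (2*j+2)
  refine h.congr_deriv ?_
  have h1 : 2*j+2-1 = 2*j+1 := by omega
  rw [h1, show 2*j+3 = (2*j+1)+2 by omega, pow_add]
  push_cast; ring

lemma hasDeriv_T' {x : ℝ} (hx : Real.cos x ≠ 0) (j : ℕ) :
    HasDerivAt (fun y => (2*(j:ℝ)+2) * Real.sin y * ((Real.cos y)⁻¹)^(2*j+3))
      ((2*(j:ℝ)+2) * (Real.cos x * ((Real.cos x)⁻¹)^(2*j+3)
        + (2*(j:ℝ)+3) * (Real.sin x)^2 * ((Real.cos x)⁻¹)^(2*j+4))) x := by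
  have hbase := (Real.hasDerivAt_sin x).fun_mul ((hasDeriv_inv_cos hx).fun_pow (2*j+3))
  have h := hbase.const_mul (2*(j:ℝ)+2)
  have heq : (fun y => (2*(j:ℝ)+2) * (Real.sin y * ((Real.cos y)⁻¹)^(2*j+3)))
      = fun y => (2*(j:ℝ)+2) * Real.sin y * ((Real.cos y)⁻¹)^(2*j+3) := by
    ext y; ring
  rw [heq] at h
  refine h.congr_deriv ?_
  have h1 : 2*j+3-1 = 2*j+2 := by omega
  rw [h1, show 2*j+4 = (2*j+2)+2 by omega, pow_add]
  push_cast; ring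

lemma hasDeriv_G (a r : ℝ) (m : ℕ) {x : ℝ} (hx : Real.cos x ≠ 0) :
    HasDerivAt (Gfun a r m) (Gfun' a r m x) x := by
  apply HasDerivAt.fun_add
  · exact (HasDerivAt.fun_sum (fun j _ => (hasDeriv_T hx j).const_mul (ee m j))).mul_const a
  · exact (Real.hasDerivAt_cos x).const_mul (2^(m+1) * r)

lemma hasDeriv_G' (a r : ℝ) (m : ℕ) {x : ℝ} (hx : Real.cos x ≠ 0) :
    HasDerivAt (Gfun' a r m) (Gfun'' a r m x) x := by
  apply HasDerivAt.fun_add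
  · exact (HasDerivAt.fun_sum (fun j _ => (hasDeriv_T' hx j).const_mul (ee m j))).mul_const a
  · have h := ((Real.hasDerivAt_sin x).const_mul (2^(m+1) * r)).fun_neg
    have heq : (fun y => -(2^(m+1) * r * Real.sin y))
        = fun y => 2^(m+1) * r * (-Real.sin y) := by ext y; ring
    rw [heq] at h
    convert h using 1
    ring

/-! ### Main induction -/

lemma main_lemma (a r : ℝ) : ∀ m : ℕ, ∀ t φ : ℝ, Real.cos t ≠ 0 →
    (DeltaIII^[m+1] (fun x ψ => (a + r * Real.cos x) * Real.cos ψ)) t φ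
      = Gfun a r m t * Real.cos φ := by
  intro m
  induction m with
  | zero =>
    intro t φ ht
    rw [Function.iterate_one]
    have h1 : ∀ᶠ s in nhds t, HasDerivAt (fun x => a + r * Real.cos x)
        (-(r * Real.sin s)) s := by
      filter_upwards with s
      have h := ((Real.hasDerivAt_cos s).const_mul r).const_add a
      refine h.congr_deriv ?_
      ring
    have h2 : HasDerivAt (fun s => -(r * Real.sin s)) (-(r * Real.cos t)) t :=
      ((Real.hasDerivAt_sin t).const_mul r).neg
    refine (delta_eq (fun x => a + r * Real.cos x) (fun s => -(r * Real.sin s))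
      (fun s => -(r * Real.cos s)) t φ h1 h2).trans ?_
    congr 1
    show _ = Gfun a r 0 t
    unfold Gfun
    rw [Finset.sum_range_one]
    have hee : ee 0 0 = 1 := rfl
    rw [hee]
    have hsq := Real.sin_sq_add_cos_sq t
    linear_combination (-(r * (Real.cos t)⁻¹)) * hsq
      + (r * Real.cos t + r * (Real.cos t)⁻¹) * (mul_inv_cancel₀ ht : Real.cos t * (Real.cos t)⁻¹ = 1)
  | succ n ih =>
    intro t φ ht
    rw [Function.iterate_succ_apply']
    have hU : IsOpen {x : ℝ | Real.cos x ≠ 0} :=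
      isOpen_compl_singleton.preimage Real.continuous_cos
    rw [DeltaIII_congr hU (fun s hs ψ => ih s ψ hs) (show t ∈ _ from ht) φ]
    have h1 : ∀ᶠ s in nhds t, HasDerivAt (Gfun a r n) (Gfun' a r n s) s := by
      filter_upwards [hU.mem_nhds ht] with s hs using hasDeriv_G a r n hs
    refine (delta_eq (Gfun a r n) (Gfun' a r n) (Gfun'' a r n) t φ h1
      (hasDeriv_G' a r n ht)).trans ?_
    congr 1
    have hcu : Real.cos t * (Real.cos t)⁻¹ = 1 := mul_inv_cancel₀ ht
    have hsq : (Real.sin t)^2 + (Real.cos t)^2 = 1 := Real.sin_sq_add_cos_sq t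
    have hsplit :
        -(∑ j ∈ Finset.range (n+1), ee n j *
            ((2*(j:ℝ)+2) * (Real.cos t * ((Real.cos t)⁻¹)^(2*j+3)
              + (2*(j:ℝ)+3) * (Real.sin t)^2 * ((Real.cos t)⁻¹)^(2*j+4))))
          + (Real.sin t * (Real.cos t)⁻¹) * (∑ j ∈ Finset.range (n+1), ee n j *
              ((2*(j:ℝ)+2) * Real.sin t * ((Real.cos t)⁻¹)^(2*j+3)))
          + ((Real.cos t)⁻¹)^2 * (∑ j ∈ Finset.range (n+1), ee n j *
              ((Real.cos t)⁻¹)^(2*j+2))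
        = ∑ j ∈ Finset.range (n+2), ee (n+1) j * ((Real.cos t)⁻¹)^(2*j+2) := by
      rw [Finset.mul_sum, Finset.mul_sum, ← Finset.sum_neg_distrib,
        ← Finset.sum_add_distrib, ← Finset.sum_add_distrib]
      refine (Finset.sum_congr rfl fun j _ => ?_).trans (sum_step n ((Real.cos t)⁻¹))
      linear_combination key_alg (j:ℝ) (Real.cos t) (Real.sin t) ((Real.cos t)⁻¹)
        (((Real.cos t)⁻¹)^(2*j+2)) hcu hsq (ee n j)
    unfold Gfun Gfun' Gfun''
    linear_combination a * hsplit + (2^(n+1)*r) * (-(Real.cos t)⁻¹) * hsq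
      + (2^(n+1)*r) * (Real.cos t + (Real.cos t)⁻¹) * hcu

theorem stmt_9 (m : ℕ) (hm : 1 ≤ m) :
    ∃ d : ℕ → ℝ, d 0 = 2 ^ (m - 1) ∧
      d (m - 1) = (-1 : ℝ) ^ (m - 1) * (2 * (m : ℝ) - 1) *
        ∏ j ∈ Finset.Icc 1 m, (2 * (j : ℝ) - 3) ^ 2 ∧
      d (m - 1) ≠ 0 ∧
      ∀ (a r t φ : ℝ), Real.cos t ≠ 0 →
        (DeltaIII^[m] (fun t φ => (a + r * Real.cos t) * Real.cos φ)) t φ =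
          (∑ j ∈ Finset.range m, d j / (Real.cos t) ^ (2 * (j + 1))) * (a * Real.cos φ)
            + 2 ^ m * r * Real.cos t * Real.cos φ := by
  obtain ⟨n, rfl⟩ : ∃ n, m = n + 1 := ⟨m - 1, by omega⟩
  refine ⟨ee n, ?_, ?_, ?_, ?_⟩
  · show ee n 0 = 2 ^ (n + 1 - 1)
    rw [ee_base]
    norm_num
  · show ee n n = _
    rw [ee_diag]
    rw [show n + 1 - 1 = n from rfl]
    congr 1
    push_cast
    ring
  · exact ee_diag_ne n
  · intro a r t φ ht
    rw [main_lemma a r n t φ ht]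
    unfold Gfun
    have hsum : ∑ j ∈ Finset.range (n+1), ee n j / (Real.cos t) ^ (2*(j+1))
        = ∑ j ∈ Finset.range (n+1), ee n j * ((Real.cos t)⁻¹)^(2*j+2) := by
      refine Finset.sum_congr rfl fun j _ => ?_
      rw [div_eq_mul_inv, ← inv_pow, show 2*(j+1) = 2*j+2 by ring]
    rw [hsum]
    ring
end

section
/- Let g(t,φ) = cos φ / cos^{k} t on an open set where cos t ≠ 0, with k a positive integer, and let Δ be the operator Δf = -f_tt + (sin t / cos t) f_t - (1/cos² t) f_φφ. Then Δg lies in the span of the functions cos φ / cos^k t and cos φ / cos^{k+2} t, with the coefficient of cos φ / cos^{k+2} t equal to -(k² - 1). -/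
open Real

lemma aux_hd1 (k : ℕ) (hk : 0 < k) (φ t : ℝ) (ht : Real.cos t ≠ 0) :
    HasDerivAt (fun s => Real.cos φ / Real.cos s ^ k)
      ((k : ℝ) * Real.sin t * Real.cos φ / Real.cos t ^ (k + 1)) t := by
  obtain ⟨m, rfl⟩ : ∃ m, k = m + 1 := ⟨k - 1, (Nat.succ_pred_eq_of_pos hk).symm⟩
  have h1 : HasDerivAt (fun s => Real.cos s ^ (m + 1))
      (((m : ℝ) + 1) * Real.cos t ^ m * (-Real.sin t)) t := by
    simpa using ((Real.hasDerivAt_cos t).fun_pow (m + 1))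
  have h2 := (hasDerivAt_const t (Real.cos φ)).fun_div h1 (pow_ne_zero _ ht)
  refine h2.congr_deriv ?_
  field_simp
  push_cast
  ring

lemma aux_hd2 (k : ℕ) (φ t : ℝ) (ht : Real.cos t ≠ 0) :
    HasDerivAt (fun s => (k : ℝ) * Real.sin s * Real.cos φ / Real.cos s ^ (k + 1))
      (((k : ℝ) * Real.cos t ^ 2 + ((k : ℝ) + 1) * (k : ℝ) * Real.sin t ^ 2) * Real.cos φ
        / Real.cos t ^ (k + 2)) t := by
  have h1 : HasDerivAt (fun s => (k : ℝ) * Real.sin s * Real.cos φ)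
      ((k : ℝ) * Real.cos t * Real.cos φ) t := by
    simpa [mul_comm, mul_assoc, mul_left_comm] using
      (((Real.hasDerivAt_sin t).const_mul (k : ℝ)).mul_const (Real.cos φ))
  have h2 : HasDerivAt (fun s => Real.cos s ^ (k + 1))
      (((k : ℝ) + 1) * Real.cos t ^ k * (-Real.sin t)) t := by
    simpa using ((Real.hasDerivAt_cos t).fun_pow (k + 1))
  have h3 := h1.fun_div h2 (pow_ne_zero _ ht)
  refine h3.congr_deriv ?_
  have hne : Real.cos t ^ k ≠ 0 := pow_ne_zero _ ht
  field_simp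
  ring

theorem stmt_10 (k : ℕ) (hk : 0 < k) :
    ∃ c₁ : ℝ, ∀ t φ : ℝ, Real.cos t ≠ 0 →
      DeltaIII (fun t φ => Real.cos φ / (Real.cos t) ^ k) t φ =
        c₁ * (Real.cos φ / (Real.cos t) ^ k)
          + (-((k : ℝ) ^ 2 - 1)) * (Real.cos φ / (Real.cos t) ^ (k + 2)) := by
  refine ⟨(k : ℝ) ^ 2 - k, fun t φ ht => ?_⟩
  -- first derivative in t
  have hT : pderivT (fun t φ => Real.cos φ / (Real.cos t) ^ k) t φ
      = (k : ℝ) * Real.sin t * Real.cos φ / Real.cos t ^ (k + 1) :=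
    (aux_hd1 k hk φ t ht).deriv
  -- second derivative in t
  have hTT : pderivT (pderivT (fun t φ => Real.cos φ / (Real.cos t) ^ k)) t φ
      = ((k : ℝ) * Real.cos t ^ 2 + ((k : ℝ) + 1) * (k : ℝ) * Real.sin t ^ 2) * Real.cos φ
        / Real.cos t ^ (k + 2) := by
    have hev : (fun s => pderivT (fun t φ => Real.cos φ / (Real.cos t) ^ k) s φ)
        =ᶠ[nhds t] (fun s => (k : ℝ) * Real.sin s * Real.cos φ / Real.cos s ^ (k + 1)) := by
      filter_upwards [Real.continuous_cos.continuousAt.eventually_ne ht] with s hs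
      exact (aux_hd1 k hk φ s hs).deriv
    calc pderivT (pderivT (fun t φ => Real.cos φ / (Real.cos t) ^ k)) t φ
        = deriv (fun s => (k : ℝ) * Real.sin s * Real.cos φ / Real.cos s ^ (k + 1)) t :=
          hev.deriv_eq
      _ = _ := (aux_hd2 k φ t ht).deriv
  -- derivatives in φ
  have hP : ∀ ψ : ℝ, pderivP (fun t φ => Real.cos φ / (Real.cos t) ^ k) t ψ
      = -Real.sin ψ / Real.cos t ^ k := by
    intro ψ
    show deriv (fun ψ => Real.cos ψ / Real.cos t ^ k) ψ = _
    rw [deriv_div_const, Real.deriv_cos]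
  have hPP : pderivP (pderivP (fun t φ => Real.cos φ / (Real.cos t) ^ k)) t φ
      = -Real.cos φ / Real.cos t ^ k := by
    have : (fun ψ => pderivP (fun t φ => Real.cos φ / (Real.cos t) ^ k) t ψ)
        = fun ψ => -Real.sin ψ / Real.cos t ^ k := funext hP
    show deriv _ φ = _
    rw [this]
    simp [deriv_div_const, neg_div]
  have hs2 : Real.sin t ^ 2 = 1 - Real.cos t ^ 2 := by
    have := Real.sin_sq_add_cos_sq t; linarith
  have hmid : Real.sin t / Real.cos t * ((k : ℝ) * Real.sin t * Real.cos φ / Real.cos t ^ (k + 1))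
      = (1 - Real.cos t ^ 2) * ((k : ℝ) * Real.cos φ) / Real.cos t ^ (k + 2) := by
    rw [← hs2]; field_simp; ring
  rw [DeltaIII, hT, hTT, hPP, hmid, hs2]
  field_simp
  ring
end

section
/- The anchor ring x(t,φ) = ((a + r cos t) cos φ, (a + r cos t) sin φ, r sin t), with 0 < r < a, is of infinite type with respect to the third fundamental form: there is no positive integer m and real constants c₁, …, c_m such that Δ^m x₁ + c₁ Δ^{m-1} x₁ + … + c_{m-1} Δ x₁ + c_m x₁ = 0 holds identically (on an open set where cos t ≠ 0), where x₁(t,φ) = (a + r cos t) cos φ and Δf = -f_tt + (sin t/cos t) f_t - (1/cos² t) f_φφ. -/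
open Real

noncomputable def qc (a r : ℝ) : ℕ → ℤ → ℝ
  | 0, j => if j = 0 then a else if j = 1 then r else 0
  | (n+1), j => ((j:ℝ) * ((j:ℝ)+1)) * qc a r n j + (1 - ((j:ℝ)+2)^2) * qc a r n (j+2)

lemma qc_support (a r : ℝ) (n : ℕ) (j : ℤ) (h : j < -(2*n) ∨ 1 < j) : qc a r n j = 0 := by
  induction n generalizing j with
  | zero =>
    simp only [qc]
    rcases h with h | h <;> (rw [if_neg (by omega), if_neg (by omega)])
  | succ n ih =>
    simp only [qc]
    rw [ih j (by push_cast at h ⊢; omega), ih (j+2) (by push_cast at h ⊢; omega)]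
    ring

noncomputable def gfun (a r : ℝ) (n : ℕ) (t : ℝ) : ℝ :=
  ∑ j ∈ Finset.Icc (-(2*(n:ℤ))) 1, qc a r n j * Real.cos t ^ j

noncomputable def dgfun (a r : ℝ) (n : ℕ) (t : ℝ) : ℝ :=
  ∑ j ∈ Finset.Icc (-(2*(n:ℤ))) 1, qc a r n j * ((j:ℝ) * Real.cos t ^ (j-1) * (-Real.sin t))

noncomputable def ddgfun (a r : ℝ) (n : ℕ) (t : ℝ) : ℝ :=
  ∑ j ∈ Finset.Icc (-(2*(n:ℤ))) 1, qc a r n j *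
    (((j:ℝ) * (((j:ℝ)-1) * Real.cos t ^ (j-2) * (-Real.sin t))) * (-Real.sin t)
      + ((j:ℝ) * Real.cos t ^ (j-1)) * (-Real.cos t))

lemma hasDerivAt_cos_zpow (j : ℤ) (t : ℝ) (h : Real.cos t ≠ 0) :
    HasDerivAt (fun s => Real.cos s ^ j) ((j:ℝ) * Real.cos t ^ (j-1) * (-Real.sin t)) t := by
  simpa [Function.comp_def, mul_assoc] using
    (hasDerivAt_zpow j (Real.cos t) (Or.inl h)).comp t (Real.hasDerivAt_cos t)

lemma hasDerivAt_gfun (a r : ℝ) (n : ℕ) (t : ℝ) (h : Real.cos t ≠ 0) :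
    HasDerivAt (fun s => gfun a r n s) (dgfun a r n t) t := by
  apply HasDerivAt.fun_sum
  intro j _
  exact (hasDerivAt_cos_zpow j t h).const_mul _

lemma hasDerivAt_dgfun (a r : ℝ) (n : ℕ) (t : ℝ) (h : Real.cos t ≠ 0) :
    HasDerivAt (fun s => dgfun a r n s) (ddgfun a r n t) t := by
  apply HasDerivAt.fun_sum
  intro j _
  apply HasDerivAt.const_mul
  have h1 : HasDerivAt (fun s => (j:ℝ) * Real.cos s ^ (j-1))
      ((j:ℝ) * (((j:ℝ)-1) * Real.cos t ^ (j-2) * (-Real.sin t))) t := by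
    have := (hasDerivAt_cos_zpow (j-1) t h).const_mul (j:ℝ)
    have e : ((j-1 : ℤ) : ℝ) = (j:ℝ) - 1 := by push_cast; ring
    have e2 : (j-1-1 : ℤ) = j - 2 := by ring
    rw [e, e2] at this
    exact this
  exact h1.mul (Real.hasDerivAt_sin t).neg

lemma alg_kernel (u s v J : ℝ) (hu : u ≠ 0) (hs : s^2 = 1 - u^2) :
    -((J*((J-1)*v*(-s)))*(-s) + (J*(v*u))*(-u))
      + (s/u)*(J*(v*u)*(-s)) + (1/u^2)*(v*u^2)
    = J*(J+1)*(v*u^2) + (1-J^2)*v := by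
  field_simp
  linear_combination (-(J^2) * v) * hs

lemma term_identity (j : ℤ) (t : ℝ) (h : Real.cos t ≠ 0) :
    -((((j:ℝ) * (((j:ℝ)-1) * Real.cos t ^ (j-2) * (-Real.sin t))) * (-Real.sin t)
        + ((j:ℝ) * Real.cos t ^ (j-1)) * (-Real.cos t)))
      + (Real.sin t / Real.cos t) * ((j:ℝ) * Real.cos t ^ (j-1) * (-Real.sin t))
      + (1/Real.cos t^2) * (Real.cos t ^ j)
    = ((j:ℝ)*((j:ℝ)+1)) * Real.cos t ^ j + (1-(j:ℝ)^2) * Real.cos t ^ (j-2) := by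
  have e1 : Real.cos t ^ j = Real.cos t ^ (j-2) * Real.cos t ^ 2 := by
    rw [show Real.cos t ^ 2 = Real.cos t ^ (2:ℤ) from (zpow_natCast _ 2).symm, ← zpow_add₀ h]
    norm_num
  have e2 : Real.cos t ^ (j-1) = Real.cos t ^ (j-2) * Real.cos t := by
    rw [show (j-1:ℤ) = (j-2)+1 by ring, zpow_add₀ h, zpow_one]
  have hs : Real.sin t ^ 2 = 1 - Real.cos t ^ 2 := Real.sin_sq t
  rw [e1, e2]
  exact alg_kernel (Real.cos t) (Real.sin t) (Real.cos t ^ (j-2)) (j:ℝ) h hs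

lemma L_identity (a r : ℝ) (n : ℕ) (t : ℝ) (h : Real.cos t ≠ 0) :
    -(ddgfun a r n t) + (Real.sin t / Real.cos t) * dgfun a r n t
      + (1/Real.cos t^2) * gfun a r n t = gfun a r (n+1) t := by
  classical
  have lhs_eq : -(ddgfun a r n t) + (Real.sin t / Real.cos t) * dgfun a r n t
      + (1/Real.cos t^2) * gfun a r n t
      = ∑ j ∈ Finset.Icc (-(2*(n:ℤ))) 1, qc a r n j *
          (((j:ℝ)*((j:ℝ)+1)) * Real.cos t ^ j + (1-(j:ℝ)^2) * Real.cos t ^ (j-2)) := by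
    unfold ddgfun dgfun gfun
    rw [← Finset.sum_neg_distrib, Finset.mul_sum, Finset.mul_sum, ← Finset.sum_add_distrib,
      ← Finset.sum_add_distrib]
    apply Finset.sum_congr rfl
    intro j _
    rw [← term_identity j t h]
    ring
  rw [lhs_eq]
  -- split and reindex
  have split : ∑ j ∈ Finset.Icc (-(2*(n:ℤ))) 1, qc a r n j *
          (((j:ℝ)*((j:ℝ)+1)) * Real.cos t ^ j + (1-(j:ℝ)^2) * Real.cos t ^ (j-2))
      = (∑ j ∈ Finset.Icc (-(2*(n:ℤ))) 1, (((j:ℝ)*((j:ℝ)+1)) * qc a r n j) * Real.cos t ^ j)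
        + ∑ j ∈ Finset.Icc (-(2*(n:ℤ))) 1, ((1-(j:ℝ)^2) * qc a r n j) * Real.cos t ^ (j-2) := by
    rw [← Finset.sum_add_distrib]
    apply Finset.sum_congr rfl
    intro j _
    ring
  rw [split]
  unfold gfun
  -- RHS
  have hIcc : (-(2*((n+1:ℕ):ℤ))) = -(2*(n:ℤ)) - 2 := by push_cast; ring
  rw [hIcc]
  have rhs_split : ∑ j ∈ Finset.Icc (-(2*(n:ℤ))-2) 1, qc a r (n+1) j * Real.cos t ^ j
      = (∑ j ∈ Finset.Icc (-(2*(n:ℤ))-2) 1, (((j:ℝ)*((j:ℝ)+1)) * qc a r n j) * Real.cos t ^ j)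
        + ∑ j ∈ Finset.Icc (-(2*(n:ℤ))-2) 1,
            ((1-((j:ℝ)+2)^2) * qc a r n (j+2)) * Real.cos t ^ j := by
    rw [← Finset.sum_add_distrib]
    apply Finset.sum_congr rfl
    intro j _
    simp only [qc]
    ring
  rw [rhs_split]
  congr 1
  · -- extend the first sum: extra terms vanish
    apply Finset.sum_subset (Finset.Icc_subset_Icc (by omega) le_rfl)
    intro j hj hj2
    simp only [Finset.mem_Icc] at hj hj2
    rw [qc_support a r n j (by omega)]
    ring
  · -- reindex the second sum j ↦ j+2
    have hmap : (Finset.Icc (-(2*(n:ℤ))-2) 1).map (addRightEmbedding 2)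
        = Finset.Icc (-(2*(n:ℤ))) 3 := by
      rw [Finset.map_add_right_Icc]
      norm_num
    have this2 : ∑ j ∈ Finset.Icc (-(2*(n:ℤ))-2) 1,
          ((1-((j:ℝ)+2)^2) * qc a r n (j+2)) * Real.cos t ^ j
        = ∑ j ∈ Finset.Icc (-(2*(n:ℤ))) 3,
            ((1-(j:ℝ)^2) * qc a r n j) * Real.cos t ^ (j-2) := by
      rw [← hmap, Finset.sum_map]
      apply Finset.sum_congr rfl
      intro j _
      simp only [addRightEmbedding_apply]
      push_cast
      rw [show (j + 2 - 2 : ℤ) = j by ring]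
    rw [this2]
    apply Finset.sum_subset (Finset.Icc_subset_Icc le_rfl (by omega))
    intro j hj hj2
    simp only [Finset.mem_Icc] at hj hj2
    rw [qc_support a r n j (by omega)]
    ring

lemma qc_lead (a r : ℝ) (ha : a ≠ 0) (n : ℕ) : qc a r n (-(2*n)) ≠ 0 := by
  induction n with
  | zero => simpa [qc] using ha
  | succ n ih =>
    rw [show (-(2 * ((n+1:ℕ) : ℤ))) = -(2*(n:ℤ))-2 by push_cast; ring]
    simp only [qc]
    rw [qc_support a r n (-(2*(n:ℤ))-2) (by omega),
        show (-(2*(n:ℤ))-2+2) = -(2*(n:ℤ)) by ring]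
    simp only [mul_zero, zero_add]
    refine mul_ne_zero ?_ ih
    push_cast
    rcases Nat.eq_zero_or_pos n with h|h
    · subst h; norm_num
    · have h1 : (1:ℝ) ≤ (n:ℝ) := by exact_mod_cast h
      nlinarith

lemma iter_formula (a r : ℝ) (n : ℕ) :
    ∀ t, Real.cos t ≠ 0 → ∀ φ,
      (DeltaIII^[n] (fun t φ => (a + r * Real.cos t) * Real.cos φ)) t φ
        = Real.cos φ * gfun a r n t := by
  induction n with
  | zero =>
    intro t ht φ
    simp only [Function.iterate_zero, id_eq, gfun]
    rw [show (-(2*((0:ℕ):ℤ))) = 0 by norm_num,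
      show Finset.Icc (0:ℤ) 1 = {0, 1} from rfl]
    simp [qc]
    ring
  | succ n ih =>
    intro t ht φ
    rw [Function.iterate_succ_apply']
    set h := DeltaIII^[n] (fun t φ => (a + r * Real.cos t) * Real.cos φ) with hh
    have hnhds : ∀ s : ℝ, Real.cos s ≠ 0 → (∀ᶠ s' in nhds s, Real.cos s' ≠ 0) := by
      intro s hs
      exact (isOpen_ne.preimage Real.continuous_cos).mem_nhds hs
    have hT : ∀ s, Real.cos s ≠ 0 → ∀ ψ, pderivT h s ψ = Real.cos ψ * dgfun a r n s := by
      intro s hs ψ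
      have heq : (fun s' => h s' ψ) =ᶠ[nhds s] (fun s' => Real.cos ψ * gfun a r n s') := by
        filter_upwards [hnhds s hs] with s' hs' using ih s' hs' ψ
      show deriv (fun s' => h s' ψ) s = _
      rw [heq.deriv_eq]
      exact ((hasDerivAt_gfun a r n s hs).const_mul (Real.cos ψ)).deriv
    have hTT : pderivT (pderivT h) t φ = Real.cos φ * ddgfun a r n t := by
      have heq : (fun s => pderivT h s φ) =ᶠ[nhds t] (fun s => Real.cos φ * dgfun a r n s) := by
        filter_upwards [hnhds t ht] with s hs using hT s hs φ
      show deriv (fun s => pderivT h s φ) t = _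
      rw [heq.deriv_eq]
      exact ((hasDerivAt_dgfun a r n t ht).const_mul (Real.cos φ)).deriv
    have hP : ∀ ψ, pderivP h t ψ = -Real.sin ψ * gfun a r n t := by
      intro ψ
      show deriv (fun χ => h t χ) ψ = _
      rw [show (fun χ => h t χ) = fun χ => Real.cos χ * gfun a r n t from
        funext fun χ => ih t ht χ]
      exact ((Real.hasDerivAt_cos ψ).mul_const _).deriv
    have hPP : pderivP (pderivP h) t φ = -Real.cos φ * gfun a r n t := by
      show deriv (fun ψ => pderivP h t ψ) φ = _
      rw [show (fun ψ => pderivP h t ψ) = fun ψ => -Real.sin ψ * gfun a r n t from funext hP]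
      exact (((Real.hasDerivAt_sin φ).neg).mul_const (gfun a r n t)).deriv
    show - pderivT (pderivT h) t φ + (Real.sin t / Real.cos t) * pderivT h t φ
        - (1 / (Real.cos t) ^ 2) * pderivP (pderivP h) t φ = _
    rw [hTT, hT t ht φ, hPP, ← L_identity a r n t ht]
    ring

lemma anchor_aux_final (a r : ℝ) (hr : 0 < r) (hra : r < a) (m : ℕ) (c : ℕ → ℝ) (x y : ℝ)
    (hm : 1 ≤ m) (hxy : x < y) (hcos : ∀ t ∈ Set.Ioo x y, Real.cos t ≠ 0)
    (key : ∀ t ∈ Set.Ioo x y,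
      gfun a r m t + ∑ i ∈ Finset.Icc 1 m, c i * gfun a r (m-i) t = 0) : False := by
  classical
  have ha : a ≠ 0 := (hr.trans hra).ne'
  set Q : Polynomial ℝ :=
    (∑ j ∈ Finset.Icc (-(2*(m:ℤ))) 1, Polynomial.C (qc a r m j)
        * Polynomial.X ^ (j + 2*m).toNat)
      + ∑ i ∈ Finset.Icc 1 m, Polynomial.C (c i) *
          ∑ j ∈ Finset.Icc (-(2*((m-i:ℕ):ℤ))) 1, Polynomial.C (qc a r (m-i) j)
            * Polynomial.X ^ (j + 2*m).toNat with hQ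
  -- evaluation of each block
  have block : ∀ (k : ℕ), k ≤ m → ∀ u : ℝ, u ≠ 0 →
      Polynomial.eval u (∑ j ∈ Finset.Icc (-(2*(k:ℤ))) 1, Polynomial.C (qc a r k j)
        * Polynomial.X ^ (j + 2*m).toNat)
      = u ^ (2*m) * ∑ j ∈ Finset.Icc (-(2*(k:ℤ))) 1, qc a r k j * u ^ j := by
    intro k hk u hu
    rw [Polynomial.eval_finset_sum, Finset.mul_sum]
    apply Finset.sum_congr rfl
    intro j hj
    simp only [Finset.mem_Icc] at hj
    rw [Polynomial.eval_mul, Polynomial.eval_C, Polynomial.eval_pow, Polynomial.eval_X]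
    have h1 : u ^ (j + 2*m).toNat = u ^ (2*m) * u ^ j := by
      rw [← zpow_natCast u (j + 2*m).toNat, Int.toNat_of_nonneg (by omega),
        ← zpow_natCast u (2*m), ← zpow_add₀ hu]
      push_cast
      ring_nf
    rw [h1]
    ring
  have evalQ : ∀ t ∈ Set.Ioo x y, Polynomial.eval (Real.cos t) Q = 0 := by
    intro t ht
    have hu := hcos t ht
    rw [hQ]
    rw [Polynomial.eval_add, block m le_rfl _ hu, Polynomial.eval_finset_sum]
    have h2 : ∑ i ∈ Finset.Icc 1 m, Polynomial.eval (Real.cos t)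
        (Polynomial.C (c i) * ∑ j ∈ Finset.Icc (-(2*((m-i:ℕ):ℤ))) 1,
          Polynomial.C (qc a r (m-i) j) * Polynomial.X ^ (j + 2*m).toNat)
        = Real.cos t ^ (2*m) * ∑ i ∈ Finset.Icc 1 m, c i * gfun a r (m-i) t := by
      rw [Finset.mul_sum]
      apply Finset.sum_congr rfl
      intro i hi
      simp only [Finset.mem_Icc] at hi
      rw [Polynomial.eval_mul, Polynomial.eval_C, block (m-i) (by omega) _ hu]
      unfold gfun
      ring
    rw [h2, ← gfun]
    have := key t ht
    rw [← mul_add]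
    rw [this, mul_zero]
  -- the image of cos is infinite
  have himg : (Real.cos '' Set.Ioo x y).Infinite := by
    by_contra hfin
    rw [Set.not_infinite] at hfin
    have hconst : ∀ t ∈ Set.Ioo x y, ∀ t' ∈ Set.Ioo x y, Real.cos t = Real.cos t' := by
      intro t ht t' ht'
      by_contra hne
      have hpre : IsPreconnected (Real.cos '' Set.Ioo x y) :=
        (isPreconnected_Ioo).image _ (Real.continuous_cos.continuousOn)
      rcases lt_or_gt_of_ne hne with hlt | hlt
      · exact (Set.Icc_infinite hlt) (hfin.subset
          (hpre.Icc_subset ⟨t, ht, rfl⟩ ⟨t', ht', rfl⟩))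
      · exact (Set.Icc_infinite hlt) (hfin.subset
          (hpre.Icc_subset ⟨t', ht', rfl⟩ ⟨t, ht, rfl⟩))
    have hsin : ∀ t ∈ Set.Ioo x y, Real.sin t = 0 := by
      intro t ht
      have hev : Real.cos =ᶠ[nhds t] (fun _ => Real.cos t) := by
        filter_upwards [isOpen_Ioo.mem_nhds ht] with s hs using hconst s hs t ht
      have h1 := hev.deriv_eq
      rw [Real.deriv_cos, deriv_const] at h1
      linarith
    set t0 := (x + y) / 2 with ht0
    have ht0m : t0 ∈ Set.Ioo x y := ⟨by linarith, by linarith⟩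
    have hev2 : Real.sin =ᶠ[nhds t0] (fun _ => 0) := by
      filter_upwards [isOpen_Ioo.mem_nhds ht0m] with s hs using hsin s hs
    have h2 := hev2.deriv_eq
    rw [Real.deriv_sin, deriv_const] at h2
    exact hcos t0 ht0m h2
  have hQ0 : Q = 0 := by
    apply Polynomial.eq_zero_of_infinite_isRoot
    apply himg.mono
    rintro u ⟨t, ht, rfl⟩
    exact evalQ t ht
  -- coefficient 0 of Q
  have hc0 : Q.coeff 0 = qc a r m (-(2*m)) := by
    rw [hQ]
    rw [Polynomial.coeff_add, Polynomial.finset_sum_coeff, Polynomial.finset_sum_coeff]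
    have hfirst : ∑ j ∈ Finset.Icc (-(2*(m:ℤ))) 1,
        (Polynomial.C (qc a r m j) * Polynomial.X ^ (j + 2*m).toNat).coeff 0
        = qc a r m (-(2*m)) := by
      rw [Finset.sum_eq_single (-(2*(m:ℤ)))]
      · rw [Polynomial.coeff_C_mul, Polynomial.coeff_X_pow]
        rw [if_pos (by omega)]
        ring
      · intro j hj hne
        simp only [Finset.mem_Icc] at hj
        rw [Polynomial.coeff_C_mul, Polynomial.coeff_X_pow, if_neg (by omega), mul_zero]
      · intro habs
        exact absurd (Finset.mem_Icc.mpr ⟨le_rfl, by omega⟩) habs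
    have hsecond : ∑ i ∈ Finset.Icc 1 m,
        (Polynomial.C (c i) * ∑ j ∈ Finset.Icc (-(2*((m-i:ℕ):ℤ))) 1,
          Polynomial.C (qc a r (m-i) j) * Polynomial.X ^ (j + 2*m).toNat).coeff 0 = 0 := by
      apply Finset.sum_eq_zero
      intro i hi
      simp only [Finset.mem_Icc] at hi
      rw [Polynomial.coeff_C_mul, Polynomial.finset_sum_coeff]
      have : ∑ j ∈ Finset.Icc (-(2*((m-i:ℕ):ℤ))) 1,
          (Polynomial.C (qc a r (m-i) j) * Polynomial.X ^ (j + 2*m).toNat).coeff 0 = 0 := by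
        apply Finset.sum_eq_zero
        intro j hj
        simp only [Finset.mem_Icc] at hj
        rw [Polynomial.coeff_C_mul, Polynomial.coeff_X_pow, if_neg (by omega), mul_zero]
      rw [this, mul_zero]
    rw [hfirst, hsecond, add_zero]
  rw [hQ0] at hc0
  simp only [Polynomial.coeff_zero] at hc0
  exact qc_lead a r ha m hc0.symm

theorem stmt_11 (a r : ℝ) (hr : 0 < r) (hra : r < a) :
    ¬ ∃ (m : ℕ) (c : ℕ → ℝ) (x y : ℝ), 1 ≤ m ∧ x < y ∧
      (∀ t ∈ Set.Ioo x y, Real.cos t ≠ 0) ∧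
      (∀ t ∈ Set.Ioo x y, ∀ φ : ℝ,
        (DeltaIII^[m] (fun t φ => (a + r * Real.cos t) * Real.cos φ)) t φ +
          ∑ i ∈ Finset.Icc 1 m,
            c i * (DeltaIII^[m - i] (fun t φ => (a + r * Real.cos t) * Real.cos φ)) t φ = 0) := by
  rintro ⟨m, c, x, y, hm, hxy, hcos, heq⟩
  have key : ∀ t ∈ Set.Ioo x y,
      gfun a r m t + ∑ i ∈ Finset.Icc 1 m, c i * gfun a r (m-i) t = 0 := by
    intro t ht
    have h0 := heq t ht 0
    rw [iter_formula a r m t (hcos t ht) 0] at h0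
    have h1 : ∑ i ∈ Finset.Icc 1 m,
        c i * (DeltaIII^[m-i] (fun t φ => (a + r * Real.cos t) * Real.cos φ)) t 0
        = ∑ i ∈ Finset.Icc 1 m, c i * (Real.cos 0 * gfun a r (m-i) t) :=
      Finset.sum_congr rfl fun i _ => by rw [iter_formula a r (m-i) t (hcos t ht) 0]
    rw [h1] at h0
    simpa [Real.cos_zero] using h0
  exact anchor_aux_final a r hr hra m c x y hm hxy hcos key
end

section
/- Let Δ be the operator Δf = -f_tt + (sin t/cos t) f_t - (1/cos² t) f_φφ and suppose the function x₁(t,φ) = (a + r cos t) cos φ (with a, r real, r ≠ 0, a ≠ 0) satisfies Δ x₁ = λ x₁ for some real λ on a nonempty open set where cos t ≠ 0. Then a contradiction follows; i.e., x₁ is not an eigenfunction of Δ. -/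
open Real

lemma aux_pT (a r : ℝ) : pderivT (fun t φ => (a + r * Real.cos t) * Real.cos φ)
    = fun t φ => (-(r * Real.sin t)) * Real.cos φ := by
  funext t φ
  simp only [pderivT]
  have h : (fun s => (a + r * Real.cos s) * Real.cos φ)
      = fun s => a * Real.cos φ + (r * Real.cos φ) * Real.cos s := by funext s; ring
  rw [h, deriv_const_add, deriv_const_mul _ (Real.differentiable_cos t), Real.deriv_cos]
  ring

lemma aux_pTT (r : ℝ) : pderivT (fun t φ => (-(r * Real.sin t)) * Real.cos φ)
    = fun t φ => (-(r * Real.cos t)) * Real.cos φ := by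
  funext t φ
  simp only [pderivT]
  have h : (fun s => (-(r * Real.sin s)) * Real.cos φ)
      = fun s => (-(r * Real.cos φ)) * Real.sin s := by funext s; ring
  rw [h, deriv_const_mul _ (Real.differentiable_sin t), Real.deriv_sin]
  ring

lemma aux_pP (a r : ℝ) : pderivP (fun t φ => (a + r * Real.cos t) * Real.cos φ)
    = fun t φ => (a + r * Real.cos t) * (-Real.sin φ) := by
  funext t φ
  simp only [pderivP]
  rw [deriv_const_mul _ (Real.differentiable_cos φ), Real.deriv_cos]

lemma aux_pPP (a r : ℝ) : pderivP (fun t φ => (a + r * Real.cos t) * (-Real.sin φ))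
    = fun t φ => (a + r * Real.cos t) * (-Real.cos φ) := by
  funext t φ
  simp only [pderivP]
  have h : (fun ψ => (a + r * Real.cos t) * (-Real.sin ψ))
      = fun ψ => (-(a + r * Real.cos t)) * Real.sin ψ := by funext ψ; ring
  rw [h, deriv_const_mul _ (Real.differentiable_sin φ), Real.deriv_sin]
  ring

lemma delta_eval (a r t φ : ℝ) :
    DeltaIII (fun t φ => (a + r * Real.cos t) * Real.cos φ) t φ
      = -((-(r * Real.cos t)) * Real.cos φ)
        + (Real.sin t / Real.cos t) * ((-(r * Real.sin t)) * Real.cos φ)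
        - (1 / (Real.cos t) ^ 2) * ((a + r * Real.cos t) * (-Real.cos φ)) := by
  simp only [DeltaIII, aux_pT, aux_pTT, aux_pP, aux_pPP]

theorem stmt_18 (a r lam : ℝ) (ha : a ≠ 0) (hr : r ≠ 0) (x y : ℝ) (hxy : x < y)
    (hcos : ∀ t ∈ Set.Ioo x y, Real.cos t ≠ 0) :
    ¬ ∀ t ∈ Set.Ioo x y, ∀ φ : ℝ,
        DeltaIII (fun t φ => (a + r * Real.cos t) * Real.cos φ) t φ =
          lam * ((a + r * Real.cos t) * Real.cos φ) := by
  intro H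
  -- Step 1: polynomial identity P(cos t) = 0 on the interval
  set P : Polynomial ℝ :=
    Polynomial.C (r * (2 - lam)) * Polynomial.X ^ 3 - Polynomial.C (lam * a) * Polynomial.X ^ 2
      + Polynomial.C a with hP
  have hroot : ∀ t ∈ Set.Ioo x y, P.IsRoot (Real.cos t) := by
    intro t ht
    have h := H t ht 0
    rw [delta_eval] at h
    have hc := hcos t ht
    have hc2 : (Real.cos t) ^ 2 ≠ 0 := pow_ne_zero _ hc
    simp only [Real.cos_zero, mul_one] at h
    -- h : r cos t - (sin t/cos t)(r sin t) + (1/cos²)(a + r cos t) = lam (a + r cos t)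
    have key : r * (2 - lam) * (Real.cos t) ^ 3 - lam * a * (Real.cos t) ^ 2 + a = 0 := by
      have h' := h
      field_simp at h'
      have key2 : Real.cos t * (r * (2 - lam) * (Real.cos t) ^ 3 - lam * a * (Real.cos t) ^ 2 + a) = 0 := by
        linear_combination Real.cos t * h' + r * Real.cos t ^ 2 * Real.sin_sq_add_cos_sq t
      exact (mul_eq_zero.mp key2).resolve_left hc
    simp only [hP, Polynomial.IsRoot, Polynomial.eval_add, Polynomial.eval_sub,
      Polynomial.eval_mul, Polynomial.eval_pow, Polynomial.eval_C, Polynomial.eval_X]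
    linarith [key]
  -- Step 2: cos is not constant on (x,y)
  have hm : (x + y) / 2 ∈ Set.Ioo x y := ⟨by linarith, by linarith⟩
  have hnc : ∃ t₁ ∈ Set.Ioo x y, ∃ t₂ ∈ Set.Ioo x y, Real.cos t₁ ≠ Real.cos t₂ := by
    by_contra hco
    push_neg at hco
    have hsin : ∀ t ∈ Set.Ioo x y, Real.sin t = 0 := by
      intro t ht
      have hev : (fun s => Real.cos s) =ᶠ[nhds t] (fun _ => Real.cos t) := by
        filter_upwards [isOpen_Ioo.mem_nhds ht] with s hs
        exact hco s hs t ht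
      have := hev.deriv_eq
      simp [Real.deriv_cos] at this
      linarith [this]
    have hev2 : (fun s => Real.sin s) =ᶠ[nhds ((x+y)/2)] (fun _ => (0:ℝ)) := by
      filter_upwards [isOpen_Ioo.mem_nhds hm] with s hs
      exact hsin s hs
    have := hev2.deriv_eq
    simp [Real.deriv_sin] at this
    exact hcos _ hm this
  obtain ⟨t₁, ht₁, t₂, ht₂, hne⟩ := hnc
  -- Step 3: the set of roots of P is infinite
  have himg : Real.cos '' Set.Ioo x y ⊆ {c | P.IsRoot c} := by
    rintro c ⟨t, ht, rfl⟩; exact hroot t ht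
  have hpc : (Real.cos '' Set.Ioo x y).OrdConnected :=
    (isPreconnected_Ioo.image _ Real.continuous_cos.continuousOn).ordConnected
  have hinf : (Real.cos '' Set.Ioo x y).Infinite := by
    rcases lt_or_gt_of_ne hne with h | h
    · exact Set.Infinite.mono
        (hpc.out ⟨t₁, ht₁, rfl⟩ ⟨t₂, ht₂, rfl⟩) (Set.Icc_infinite h)
    · exact Set.Infinite.mono
        (hpc.out ⟨t₂, ht₂, rfl⟩ ⟨t₁, ht₁, rfl⟩) (Set.Icc_infinite h)
  have hP0 : P = 0 := Polynomial.eq_zero_of_infinite_isRoot P (hinf.mono himg)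
  have : P.coeff 0 = a := by
    simp [hP, Polynomial.coeff_X_pow]
  rw [hP0] at this
  simp at this
  exact ha this.symm
end
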